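/- Let f : ℝ^d → ℝ be differentiable and satisfy the zero-chain property prog(∇f(x)) ≤ prog(x) + 1 for all x ∈ ℝ^d. Let p ∈ (0,1], let Z be a Bernoulli(p) random variable, and define the stochastic gradient oracle O(x;Z) ∈ ℝ^d coordinate-wise by [O(x;Z)]_j = [∇f(x)]_j · (1 + 1{j > prog(x)}·(Z/p − 1)) for j = 1,…,d. Then for every x ∈ ℝ^d: (1) E[O(x;Z)] = ∇f(x); and (2) E[‖O(x;Z) − ∇f(x)‖²] = |[∇f(x)]_{prog(x)+1}|² · (1−p)/p ≤ ‖∇f(x)‖_∞² · (1−p)/p, where [∇f(x)]_{prog(x)+1} is interpreted as 0 when prog(x) = d. -/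

import Mathlib

set_option autoImplicit false
set_option maxHeartbeats 1000000

open MeasureTheory

noncomputable section

/-- The bump `ψ` from Arjevani et al. -/
def ψfun (z : ℝ) : ℝ := if z ≤ 1 / 2 then 0 else Real.exp (1 - 1 / (2 * z - 1) ^ 2)

/-- The soft step `φ(z) = √e ∫_{-∞}^z e^{-t²/2} dt`. -/
def φfun (z : ℝ) : ℝ := Real.sqrt (Real.exp 1) * ∫ t in Set.Iic z, Real.exp (-t ^ 2 / 2)

/-- The hard zero-chain function `h` on `ℝ^{d+1}` (coordinates are 0-based: the paper's
`x_j` is `x ⟨j-1⟩`). -/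
def hardFun {d : ℕ} (x : EuclideanSpace ℝ (Fin (d + 1))) : ℝ :=
  -(ψfun 1) * φfun (x 0) +
    ∑ j : Fin d,
      (ψfun (-(x j.castSucc)) * φfun (-(x j.succ)) - ψfun (x j.castSucc) * φfun (x j.succ))

/-- `h₁`: the part of `h` with pairs `(x_j, x_{j+1})` for (1-based) even `j`,
doubled, together with the doubled first term. -/
def hardFun1 {d : ℕ} (x : EuclideanSpace ℝ (Fin (d + 1))) : ℝ :=
  -2 * ψfun 1 * φfun (x 0) +
    2 * ∑ j : Fin d, if Even ((j : ℕ) + 1) then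
      ψfun (-(x j.castSucc)) * φfun (-(x j.succ)) - ψfun (x j.castSucc) * φfun (x j.succ)
    else 0

/-- `h₂`: the doubled part of `h` with pairs `(x_j, x_{j+1})` for (1-based) odd `j`. -/
def hardFun2 {d : ℕ} (x : EuclideanSpace ℝ (Fin (d + 1))) : ℝ :=
  2 * ∑ j : Fin d, if Odd ((j : ℕ) + 1) then
      ψfun (-(x j.castSucc)) * φfun (-(x j.succ)) - ψfun (x j.castSucc) * φfun (x j.succ)
    else 0

/-- `prog x`: `0` if `x = 0`, otherwise the largest (1-based) index of a nonzero
coordinate of `x`. -/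
def progVec {m : ℕ} (x : EuclideanSpace ℝ (Fin m)) : ℕ :=
  sSup {k | ∃ j : Fin m, x j ≠ 0 ∧ k = (j : ℕ) + 1}

/-- the Bernoulli stochastic gradient oracle: for a differentiable
zero-chain function `f` on `ℝ^d`, a Bernoulli(`p`) random variable `Z`, and the oracle
`[O(x;Z)]_j = [∇f(x)]_j (1 + 1{j > prog x}(Z/p - 1))`, one has `E[O(x;Z)] = ∇f(x)` and
`E[‖O(x;Z) - ∇f(x)‖²] = |[∇f(x)]_{prog x + 1}|² (1-p)/p ≤ ‖∇f(x)‖_∞² (1-p)/p`. -/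
lemma progVec_ge {m : ℕ} (y : EuclideanSpace ℝ (Fin m)) (j : Fin m) (h : y j ≠ 0) :
    (j : ℕ) + 1 ≤ progVec y := by
  apply le_csSup
  · refine ⟨m, fun k hk => ?_⟩
    obtain ⟨i, _, rfl⟩ := hk
    exact i.isLt
  · exact ⟨j, h, rfl⟩

theorem bernoulli_oracle_properties (d : ℕ)
    (f : EuclideanSpace ℝ (Fin d) → ℝ)
    (hdiff : Differentiable ℝ f)
    (hchain : ∀ x, progVec (gradient f x) ≤ progVec x + 1)
    (p : ℝ) (hp0 : 0 < p) (hp1 : p ≤ 1)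
    {Ω : Type} [MeasurableSpace Ω] (μ : Measure Ω) [IsProbabilityMeasure μ]
    (Z : Ω → ℝ) (hZmeas : Measurable Z)
    (hZval : ∀ ω, Z ω = 0 ∨ Z ω = 1)
    (hZp : μ {ω | Z ω = 1} = ENNReal.ofReal p)
    (O : EuclideanSpace ℝ (Fin d) → Ω → EuclideanSpace ℝ (Fin d))
    (hO : ∀ x ω j, O x ω j =
      gradient f x j * (1 + (if progVec x ≤ (j : ℕ) then Z ω / p - 1 else 0))) :
    ∀ x : EuclideanSpace ℝ (Fin d),
      (∫ ω, O x ω ∂μ) = gradient f x ∧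
      (∫ ω, ‖O x ω - gradient f x‖ ^ 2 ∂μ)
        = (if h : progVec x < d then gradient f x ⟨progVec x, h⟩ else 0) ^ 2
            * ((1 - p) / p) ∧
      (∫ ω, ‖O x ω - gradient f x‖ ^ 2 ∂μ)
        ≤ (⨆ j : Fin d, |gradient f x j|) ^ 2 * ((1 - p) / p) := by
  intro x
  set g : EuclideanSpace ℝ (Fin d) := gradient f x with hg
  set n : ℕ := progVec x with hn
  -- Z is integrable with mean p
  have hZint : Integrable Z μ := by
    refine Integrable.mono' (integrable_const (1:ℝ)) hZmeas.aestronglyMeasurable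
      (Filter.Eventually.of_forall fun ω => ?_)
    rcases hZval ω with h | h <;> simp [h]
  have hsmeas : MeasurableSet {ω | Z ω = 1} := hZmeas (measurableSet_singleton 1)
  have hZindic : Z = Set.indicator {ω | Z ω = 1} (fun _ => (1:ℝ)) := by
    funext ω
    rcases hZval ω with h | h <;> simp [Set.indicator_apply, Set.mem_setOf_eq, h]
  have hEZ : (∫ ω, Z ω ∂μ) = p := by
    have heq : (∫ ω, Z ω ∂μ) = ∫ ω, Set.indicator {ω | Z ω = 1} 1 ω ∂μ :=
      integral_congr_ae (Filter.Eventually.of_forall fun ω => congrFun hZindic ω)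
    rw [heq, integral_indicator_one hsmeas, measureReal_def, hZp, ENNReal.toReal_ofReal hp0.le]
  -- the centered variable c = Z/p - 1
  have hcint : Integrable (fun ω => Z ω / p - 1) μ := (hZint.div_const p).sub (integrable_const 1)
  have hEc : (∫ ω, (Z ω / p - 1) ∂μ) = 0 := by
    rw [integral_sub (hZint.div_const p) (integrable_const 1), integral_div, hEZ,
      div_self hp0.ne', integral_const]
    simp
  have hsq : ∀ ω, (Z ω / p - 1) ^ 2 = Z ω * (1 / p ^ 2 - 2 / p) + 1 := by
    intro ω
    rcases hZval ω with h | h <;> rw [h] <;> field_simp <;> ring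
  have hc2int : Integrable (fun ω => (Z ω / p - 1) ^ 2) μ := by
    simp_rw [hsq]
    exact (hZint.mul_const _).add (integrable_const 1)
  have hEc2 : (∫ ω, (Z ω / p - 1) ^ 2 ∂μ) = (1 - p) / p := by
    simp_rw [hsq]
    rw [integral_add (hZint.mul_const _) (integrable_const 1), integral_mul_const, hEZ,
      integral_const]
    simp only [measure_univ, probReal_univ, ENNReal.toReal_one, smul_eq_mul, one_mul]
    field_simp
    ring
  -- gradient coordinates beyond n vanish
  have hgz : ∀ j : Fin d, n < (j : ℕ) → g j = 0 := by
    intro j hj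
    by_contra hne
    have h1 := progVec_ge g j hne
    have h2 := hchain x
    rw [← hg, ← hn] at h2
    omega
  -- the noise direction
  set v : EuclideanSpace ℝ (Fin d) := WithLp.toLp 2 (fun j : Fin d => if n ≤ (j : ℕ) then g j else 0) with hv
  have hOv : ∀ ω, O x ω = g + (Z ω / p - 1) • v := by
    intro ω
    ext j
    rw [hO]
    simp only [PiLp.add_apply, PiLp.smul_apply, smul_eq_mul, hv, ← hg, ← hn]
    by_cases h : n ≤ (j : ℕ) <;> simp [h] <;> ring
  have hOfun : (fun ω => O x ω) = fun ω => g + (Z ω / p - 1) • v := funext hOv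
  -- first statement
  have part1 : (∫ ω, O x ω ∂μ) = g := by
    rw [hOfun, integral_add (integrable_const g) (hcint.smul_const v),
      integral_smul_const, hEc, integral_const]
    simp
  -- squared norm of v
  have hvnorm : ‖v‖ ^ 2 = (if h : n < d then g ⟨n, h⟩ else 0) ^ 2 := by
    rw [EuclideanSpace.norm_eq, Real.sq_sqrt (by positivity)]
    by_cases h : n < d
    · rw [dif_pos h, Finset.sum_eq_single (⟨n, h⟩ : Fin d)]
      · simp [hv, Real.norm_eq_abs, sq_abs]
      · intro j _ hj
        by_cases hle : n ≤ (j : ℕ)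
        · have hlt : n < (j : ℕ) := lt_of_le_of_ne hle fun e => hj (Fin.ext e.symm)
          simp [hv, hle, hgz j hlt]
        · simp [hv, hle]
      · intro h'
        exact absurd (Finset.mem_univ _) h'
    · rw [dif_neg h]
      have hz : ∀ j : Fin d, v j = 0 := by
        intro j
        have : ¬ n ≤ (j : ℕ) := by
          have := j.isLt
          omega
        simp [hv, this]
      simp [hz]
  -- second statement
  have part2 : (∫ ω, ‖O x ω - g‖ ^ 2 ∂μ)
      = (if h : n < d then g ⟨n, h⟩ else 0) ^ 2 * ((1 - p) / p) := by
    have hnormeq : ∀ ω, ‖O x ω - g‖ ^ 2 = (Z ω / p - 1) ^ 2 * ‖v‖ ^ 2 := by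
      intro ω
      rw [hOv, add_sub_cancel_left, norm_smul, Real.norm_eq_abs, mul_pow, sq_abs]
    simp_rw [hnormeq]
    rw [integral_mul_const, hEc2, hvnorm, mul_comm]
  refine ⟨part1, part2, ?_⟩
  rw [part2]
  have hc : (0:ℝ) ≤ (1 - p) / p := div_nonneg (by linarith) hp0.le
  apply mul_le_mul_of_nonneg_right _ hc
  by_cases h : n < d
  · rw [dif_pos h]
    have hb : BddAbove (Set.range fun j : Fin d => |g j|) :=
      (Set.finite_range _).bddAbove
    have h1 : |g ⟨n, h⟩| ≤ ⨆ j : Fin d, |g j| := le_ciSup hb ⟨n, h⟩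
    calc g ⟨n, h⟩ ^ 2 = |g ⟨n, h⟩| ^ 2 := (sq_abs _).symm
      _ ≤ (⨆ j : Fin d, |g j|) ^ 2 := by
          apply pow_le_pow_left₀ (abs_nonneg _) h1
  · rw [dif_neg h]
    simpa using sq_nonneg (⨆ j : Fin d, |g j|)


end
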